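/- For every m ≥ 0, the polynomial identity P_{pm}^p(t) = t^{m·Δ_{p−2}} · P_m^p(t) holds. -/

import Mathlib

open MeasureTheory
open scoped NNReal ENNReal

namespace Chacon

/-- The space of digit sequences with digits in `{0, …, p-1}`. -/
def Gamma (p : ℕ) : Set (ℕ → ℕ) := {x | ∀ i, x i < p}

/-- `Γ*`: sequences with digits `< p` having infinitely many coordinates `≠ p - 1`. -/
def GammaStar (p : ℕ) : Set (ℕ → ℕ) :=
  {x | (∀ i, x i < p) ∧ {i | x i ≠ p - 1}.Infinite}

/-- The least index `i` with `x i ≠ p - 1`. -/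
noncomputable def firstNot (p : ℕ) (x : ℕ → ℕ) : ℕ :=
  sInf {i | x i ≠ p - 1}

/-- `φ(x) = x_i` where `i` is the least index with `x_i ≠ p - 1`. -/
noncomputable def phi (p : ℕ) (x : ℕ → ℕ) : ℕ :=
  x (firstNot p x)

/-- The odometer `S` (addition of `1` with carry): the initial run of digits
`p - 1` is replaced by zeros, and the first digit `≠ p - 1` is increased by one. -/
noncomputable def odo (p : ℕ) (x : ℕ → ℕ) : ℕ → ℕ :=
  fun i =>
    if i < firstNot p x then 0
    else if i = firstNot p x then x i + 1
    else x i

/-- `φ^(m)(x) = ∑_{j=0}^{m-1} φ(S^j x)`. -/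
noncomputable def phiSum (p m : ℕ) (x : ℕ → ℕ) : ℕ :=
  ∑ j ∈ Finset.range m, phi p ((odo p)^[j] x)

/-- The base-`p` digit sequence of a real number `u`. -/
noncomputable def digitsOf (p : ℕ) (u : ℝ) : ℕ → ℕ :=
  fun i => (⌊u * (p : ℝ) ^ (i + 1)⌋).toNat % p

/-- `λ`: the product probability measure on digit sequences under which the
coordinates are i.i.d., uniformly distributed in `{0, …, p-1}`; it is realized
concretely as the distribution of the base-`p` digit sequence of a uniformly
distributed random point of `[0,1)`. -/
noncomputable def lam (p : ℕ) : Measure (ℕ → ℕ) :=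
  Measure.map (digitsOf p) (volume.restrict (Set.Ico (0 : ℝ) 1))

/-- `π_m(j) = λ({x : φ^(m)(x) = j})`. -/
noncomputable def pim (p m j : ℕ) : ℝ≥0∞ :=
  lam p {x | phiSum p m x = j}

/-- `P_m^p(t) = ∑_{j ≥ 0} π_m(j) t^j`, a real polynomial
(the sum is over `0 ≤ j ≤ m (p-2)` since `0 ≤ φ^(m) ≤ m (p-2)` a.s.). -/
noncomputable def P (p m : ℕ) (t : ℝ) : ℝ :=
  ∑ j ∈ Finset.range (m * (p - 2) + 1), (pim p m j).toReal * t ^ j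

/-- The `n`-th triangular number `Δ_n = n (n+1) / 2`. -/
def tri (n : ℕ) : ℕ := n * (n + 1) / 2

/-- The degree `D_m` of `P_m^p`: the largest `j` with `π_m(j) ≠ 0`. -/
noncomputable def D (p m : ℕ) : ℕ := sSup {j | pim p m j ≠ 0}

/-- The lower degree `d_m` of `P_m^p`: the least `j` with `π_m(j) ≠ 0`. -/
noncomputable def d (p m : ℕ) : ℕ := sInf {j | pim p m j ≠ 0}


/-! Auxiliary dynamics -/

def sh (x : ℕ → ℕ) : ℕ → ℕ := fun i => x (i + 1)

def Good (p : ℕ) (x : ℕ → ℕ) : Prop :=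
  (∀ i, x i < p) ∧ ∀ N, ∃ i, N ≤ i ∧ x i ≠ p - 1

variable {p : ℕ} {x : ℕ → ℕ}

lemma firstNot_eq_zero (h : x 0 ≠ p - 1) : firstNot p x = 0 :=
  Nat.sInf_eq_zero.mpr (Or.inl h)

lemma phi_eq (h : x 0 ≠ p - 1) : phi p x = x 0 := by
  rw [phi, firstNot_eq_zero h]

lemma odo_eq_update (h : x 0 ≠ p - 1) : odo p x = Function.update x 0 (x 0 + 1) := by
  funext i
  simp only [odo, firstNot_eq_zero h, Nat.not_lt_zero, if_false]
  rcases eq_or_ne i 0 with rfl | hi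
  · simp
  · simp [Function.update_apply, hi]

lemma sh_update (v : ℕ) : sh (Function.update x 0 v) = sh x := by
  funext i; simp [sh, Function.update_apply]

lemma firstNot_shift (h0 : x 0 = p - 1) (hne : ∃ i, sh x i ≠ p - 1) :
    firstNot p x = firstNot p (sh x) + 1 := by
  have hmem : (firstNot p (sh x) + 1) ∈ {i | x i ≠ p - 1} := Nat.sInf_mem hne
  refine le_antisymm (Nat.sInf_le hmem) ?_
  have hmem' : firstNot p x ∈ {i | x i ≠ p - 1} := Nat.sInf_mem ⟨_, hmem⟩
  rcases Nat.eq_zero_or_pos (firstNot p x) with h | h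
  · exact absurd (h ▸ hmem') (by simp [h0])
  · obtain ⟨k, hk⟩ := Nat.exists_eq_succ_of_ne_zero h.ne'
    have hks : sh x k ≠ p - 1 := by simpa [sh, ← Nat.succ_eq_add_one, ← hk] using hmem'
    have hle : firstNot p (sh x) ≤ k := Nat.sInf_le hks
    omega

lemma phi_shift (h0 : x 0 = p - 1) (hne : ∃ i, sh x i ≠ p - 1) :
    phi p x = phi p (sh x) := by
  rw [phi, phi, firstNot_shift h0 hne]; rfl

lemma odo_zero (h0 : x 0 = p - 1) (hne : ∃ i, sh x i ≠ p - 1) : odo p x 0 = 0 := by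
  rw [odo]
  rw [if_pos (by rw [firstNot_shift h0 hne]; omega)]

lemma sh_odo_high (h0 : x 0 = p - 1) (hne : ∃ i, sh x i ≠ p - 1) :
    sh (odo p x) = odo p (sh x) := by
  funext i
  have hF := firstNot_shift h0 hne
  simp only [sh, odo, hF,
    show (i + 1 < firstNot p (sh x) + 1) ↔ i < firstNot p (sh x) by omega,
    show (i + 1 = firstNot p (sh x) + 1) ↔ i = firstNot p (sh x) by omega]

lemma sh_odo_low (h : x 0 ≠ p - 1) : sh (odo p x) = sh x := by
  rw [odo_eq_update h, sh_update]

lemma good_tail_ex (hx : Good p x) : ∃ i, x i ≠ p - 1 :=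
  (hx.2 0).imp fun _ h => h.2

lemma firstNot_mem (hx : ∃ i, x i ≠ p - 1) : x (firstNot p x) ≠ p - 1 :=
  Nat.sInf_mem hx

lemma good_sh (hx : Good p x) : Good p (sh x) := by
  refine ⟨fun i => hx.1 (i + 1), fun N => ?_⟩
  obtain ⟨i, hi, hne⟩ := hx.2 (N + 1)
  refine ⟨i - 1, by omega, ?_⟩
  have : i - 1 + 1 = i := by omega
  simpa [sh, this] using hne

lemma good_odo (hp : 3 ≤ p) (hx : Good p x) : Good p (odo p x) := by
  constructor
  · intro i
    have hF : x (firstNot p x) ≠ p - 1 := firstNot_mem (good_tail_ex hx)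
    have hFlt : x (firstNot p x) < p := hx.1 _
    rw [odo]
    split_ifs with h1 h2
    · omega
    · rw [h2]; omega
    · exact hx.1 i
  · intro N
    obtain ⟨i, hi, hne⟩ := hx.2 (max N (firstNot p x + 1))
    refine ⟨i, le_trans (le_max_left _ _) hi, ?_⟩
    have h1 : ¬ i < firstNot p x := by have := le_max_right N (firstNot p x + 1); omega
    have h2 : i ≠ firstNot p x := by have := le_max_right N (firstNot p x + 1); omega
    rw [odo]
    simpa [h1, h2] using hne

lemma phi_le (hp : 3 ≤ p) (hx : Good p x) : phi p x ≤ p - 2 := by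
  have hF : x (firstNot p x) ≠ p - 1 := firstNot_mem (good_tail_ex hx)
  have hFlt : x (firstNot p x) < p := hx.1 _
  rw [phi]; omega

lemma good_iter (hp : 3 ≤ p) (hx : Good p x) (j : ℕ) : Good p ((odo p)^[j] x) := by
  induction j with
  | zero => exact hx
  | succ j ih => rw [Function.iterate_succ_apply']; exact good_odo hp ih

lemma iterate_update (j : ℕ) (hj : x 0 + j ≤ p - 1) :
    (odo p)^[j] x = Function.update x 0 (x 0 + j) := by
  induction j with
  | zero => simp
  | succ j ih =>
    rw [Function.iterate_succ_apply', ih (by omega),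
        odo_eq_update (by simp only [Function.update_self]; omega)]
    simp [Function.update_idem, Nat.add_assoc]

lemma sum_shift (a b : ℕ) :
    ∑ v ∈ Finset.range a, v + ∑ j ∈ Finset.range b, (j + a) = ∑ v ∈ Finset.range (a + b), v := by
  induction b with
  | zero => simp
  | succ b ih =>
    rw [Finset.sum_range_succ, show a + (b + 1) = (a + b) + 1 by omega,
        Finset.sum_range_succ (fun v => v) (a + b)]
    omega

lemma block (hp : 3 ≤ p) (hx : Good p x) :
    phiSum p p x = tri (p - 2) + phi p (sh x) ∧
      sh ((odo p)^[p] x) = odo p (sh x) := by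
  have hx0 := hx.1 0
  have ha : x 0 ≤ p - 1 := by omega
  have hne : ∃ i, sh x i ≠ p - 1 := good_tail_ex (good_sh hx)
  obtain ⟨z, hz_def⟩ : ∃ z, Function.update x 0 (p - 1) = z := ⟨_, rfl⟩
  have hz : (odo p)^[p - 1 - x 0] x = z := by
    rw [iterate_update (p - 1 - x 0) (by omega),
        show x 0 + (p - 1 - x 0) = p - 1 by omega, hz_def]
  have hz0 : z 0 = p - 1 := by rw [← hz_def]; exact Function.update_self _ _ _
  have hzsh : sh z = sh x := by rw [← hz_def]; exact sh_update _
  have hzn : ∃ i, sh z i ≠ p - 1 := by rw [hzsh]; exact hne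
  obtain ⟨y, hy_def⟩ : ∃ y, odo p z = y := ⟨_, rfl⟩
  have hy : (odo p)^[p - 1 - x 0 + 1] x = y := by
    rw [Function.iterate_succ_apply', hz, hy_def]
  have hy0 : y 0 = 0 := by rw [← hy_def]; exact odo_zero hz0 hzn
  have hysh : sh y = odo p (sh x) := by rw [← hy_def, sh_odo_high hz0 hzn, hzsh]
  have hyk : ∀ k, k ≤ p - 1 → (odo p)^[p - 1 - x 0 + 1 + k] x = Function.update y 0 k := by
    intro k hk
    rw [show p - 1 - x 0 + 1 + k = k + (p - 1 - x 0 + 1) by omega,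
        Function.iterate_add_apply, hy, iterate_update k (by omega), hy0, Nat.zero_add]
  have hp_split : p = p - 1 - x 0 + 1 + x 0 := by omega
  have h1 : ∀ j ∈ Finset.range (p - 1 - x 0), phi p ((odo p)^[j] x) = j + x 0 := by
    intro j hj
    simp only [Finset.mem_range] at hj
    rw [iterate_update j (by omega), phi_eq, Function.update_self, Nat.add_comm]
    rw [Function.update_self]; omega
  have h2 : phi p ((odo p)^[p - 1 - x 0] x) = phi p (sh x) := by
    rw [hz, phi_shift hz0 hzn, hzsh]
  have h3 : ∀ k ∈ Finset.range (x 0), phi p ((odo p)^[p - 1 - x 0 + 1 + k] x) = k := by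
    intro k hk
    simp only [Finset.mem_range] at hk
    rw [hyk k (by omega), phi_eq]
    · exact Function.update_self _ _ _
    · rw [Function.update_self]; omega
  constructor
  · have hs1 : phiSum p p x
        = ∑ j ∈ Finset.range (p - 1 - x 0 + 1), phi p ((odo p)^[j] x)
          + ∑ k ∈ Finset.range (x 0), phi p ((odo p)^[p - 1 - x 0 + 1 + k] x) := by
      rw [phiSum, show Finset.range p = Finset.range (p - 1 - x 0 + 1 + x 0) by
        rw [← hp_split]]
      exact Finset.sum_range_add _ _ _
    have hs2 : ∑ j ∈ Finset.range (p - 1 - x 0 + 1), phi p ((odo p)^[j] x)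
        = ∑ j ∈ Finset.range (p - 1 - x 0), phi p ((odo p)^[j] x)
          + phi p ((odo p)^[p - 1 - x 0] x) := Finset.sum_range_succ _ _
    rw [hs1, hs2, Finset.sum_congr rfl h1, Finset.sum_congr rfl h3, h2]
    have h4 := sum_shift (x 0) (p - 1 - x 0)
    rw [show x 0 + (p - 1 - x 0) = p - 1 by omega] at h4
    have h5 : ∑ v ∈ Finset.range (p - 1), v = (p - 1) * (p - 2) / 2 := by
      rw [Finset.sum_range_id, show p - 1 - 1 = p - 2 by omega]
    rw [tri, show p - 2 + 1 = p - 1 by omega, Nat.mul_comm (p - 2) (p - 1)]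
    omega
  · have h5 := hyk (x 0) (by omega)
    rw [show p - 1 - x 0 + 1 + x 0 = p by omega] at h5
    rw [h5, sh_update, hysh]

lemma sh_iter (hp : 3 ≤ p) (hx : Good p x) (m : ℕ) :
    sh ((odo p)^[p * m] x) = (odo p)^[m] (sh x) := by
  induction m with
  | zero => simp
  | succ m ih =>
    rw [show p * (m + 1) = p + p * m by ring, Function.iterate_add_apply,
        (block hp (good_iter hp hx (p * m))).2, ih]
    exact (Function.iterate_succ_apply' _ _ _).symm

lemma phiSum_succ (m : ℕ) (y : ℕ → ℕ) :
    phiSum p (m + 1) y = phiSum p m y + phi p ((odo p)^[m] y) := by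
  rw [phiSum, Finset.sum_range_succ, ← phiSum]

lemma main_identity (hp : 3 ≤ p) (hx : Good p x) (m : ℕ) :
    phiSum p (p * m) x = m * tri (p - 2) + phiSum p m (sh x) := by
  induction m with
  | zero => simp [phiSum]
  | succ m ih =>
    have hchunk : ∑ j ∈ Finset.range p, phi p ((odo p)^[p * m + j] x)
        = phiSum p p ((odo p)^[p * m] x) := by
      rw [phiSum]
      exact Finset.sum_congr rfl fun j _ => by
        rw [add_comm (p * m) j, Function.iterate_add_apply]
    have hsplit : phiSum p (p * (m + 1)) x =
        phiSum p (p * m) x + phiSum p p ((odo p)^[p * m] x) := by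
      rw [phiSum, show p * (m + 1) = p * m + p by ring, Finset.sum_range_add, hchunk, ← phiSum]
    rw [hsplit, ih, (block hp (good_iter hp hx (p * m))).1, sh_iter hp hx m, phiSum_succ]
    ring


/-! Digits -/

lemma digitsOf_eq_natFloor (p : ℕ) {u : ℝ} (hu : 0 ≤ u) (i : ℕ) :
    digitsOf p u i = ⌊u * (p : ℝ) ^ (i + 1)⌋₊ % p := rfl

lemma natFloor_div (hp : 3 ≤ p) (u : ℝ) (i : ℕ) :
    ⌊u * (p : ℝ) ^ (i + 1 + 1)⌋₊ / p = ⌊u * (p : ℝ) ^ (i + 1)⌋₊ := by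
  have hp0 : (p : ℝ) ≠ 0 := by
    have : (0:ℝ) < p := by exact_mod_cast (by omega : 0 < p)
    exact this.ne'
  rw [← Nat.floor_div_natCast]
  congr 1
  rw [pow_succ, ← mul_assoc, mul_div_assoc, div_self hp0, mul_one]

lemma exists_digit_ne (hp : 3 ≤ p) {u : ℝ} (hu : 0 ≤ u) (N : ℕ) :
    ∃ i, N ≤ i ∧ digitsOf p u i ≠ p - 1 := by
  by_contra hcon
  push_neg at hcon
  have hp0 : (0:ℝ) < p := by exact_mod_cast (by omega : 0 < p)
  set G : ℕ → ℕ := fun j => ⌊u * (p : ℝ) ^ (j + 1)⌋₊ with hG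
  have hGmod : ∀ j, N ≤ j → G j % p = p - 1 := by
    intro j hj
    have := hcon j hj
    rwa [digitsOf_eq_natFloor p hu] at this
  have hGdiv : ∀ j, G (j + 1) / p = G j := fun j => natFloor_div hp u j
  set A : ℕ := G N + 1 with hA
  have hA1 : 1 ≤ A := by omega
  have key : ∀ k, G (N + k) = A * p ^ k - 1 := by
    intro k
    induction k with
    | zero => simp [hA]
    | succ k ih =>
      have hdm := Nat.div_add_mod (G (N + k + 1)) p
      rw [hGdiv (N + k), hGmod (N + k + 1) (by omega), ih] at hdm
      have h1 : 1 ≤ A * p ^ k := Nat.one_le_iff_ne_zero.mpr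
        (by positivity)
      have hB : p * (A * p ^ k) = A * p ^ (k + 1) := by ring
      have h2 : p * 1 ≤ p * (A * p ^ k) := Nat.mul_le_mul_left p h1
      rw [Nat.mul_sub] at hdm
      rw [show N + (k + 1) = N + k + 1 by omega]
      omega
  have hup : u * (p : ℝ) ^ (N + 1) < A := by
    have := Nat.lt_floor_add_one (u * (p : ℝ) ^ (N + 1))
    have hAc : (A : ℝ) = (G N : ℝ) + 1 := by rw [hA]; push_cast; ring
    rw [hAc]
    exact this
  set δ : ℝ := (A : ℝ) - u * (p : ℝ) ^ (N + 1) with hδdef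
  have hδ : 0 < δ := by rw [hδdef]; linarith
  have key2 : ∀ k : ℕ, δ * (p : ℝ) ^ k ≤ 1 := by
    intro k
    have h1 : 1 ≤ A * p ^ k := Nat.one_le_iff_ne_zero.mpr (by positivity)
    have hfl : (G (N + k) : ℝ) ≤ u * (p : ℝ) ^ (N + k + 1) := Nat.floor_le (by positivity)
    rw [key k] at hfl
    have hcast : ((A * p ^ k - 1 : ℕ) : ℝ) = (A : ℝ) * (p : ℝ) ^ k - 1 := by
      rw [Nat.cast_sub h1]; push_cast; ring
    rw [hcast] at hfl
    have hpow : (p : ℝ) ^ (N + k + 1) = (p : ℝ) ^ (N + 1) * (p : ℝ) ^ k := by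
      rw [← pow_add]; congr 1; omega
    rw [hpow] at hfl
    nlinarith [hfl]
  obtain ⟨k, hk⟩ := pow_unbounded_of_one_lt δ⁻¹ (show (1:ℝ) < p by exact_mod_cast (by omega : 1 < p))
  have h6 := key2 k
  have h7 : δ * δ⁻¹ < δ * (p : ℝ) ^ k := mul_lt_mul_of_pos_left hk hδ
  rw [mul_inv_cancel₀ hδ.ne'] at h7
  linarith

lemma good_digitsOf (hp : 3 ≤ p) {u : ℝ} (hu : 0 ≤ u) : Good p (digitsOf p u) :=
  ⟨fun _ => Nat.mod_lt _ (by omega), exists_digit_ne hp hu⟩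

lemma sh_digitsOf (hp : 3 ≤ p) {u : ℝ} (hu : 0 ≤ u) :
    sh (digitsOf p u) = digitsOf p (Int.fract ((p : ℝ) * u)) := by
  funext i
  have hp0 : (0:ℝ) < p := by exact_mod_cast (by omega : 0 < p)
  have hfl : ⌊Int.fract ((p:ℝ) * u) * (p:ℝ) ^ (i + 1)⌋
      = ⌊u * (p:ℝ) ^ (i + 1 + 1)⌋ - ⌊(p:ℝ) * u⌋ * (p : ℤ) ^ (i + 1) := by
    have heq : Int.fract ((p:ℝ) * u) * (p:ℝ) ^ (i + 1)
        = u * (p:ℝ) ^ (i + 1 + 1) - ((⌊(p:ℝ) * u⌋ * (p : ℤ) ^ (i + 1) : ℤ) : ℝ) := by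
      rw [Int.fract]
      push_cast
      ring
    rw [heq, Int.floor_sub_intCast]
  show (⌊u * (p:ℝ) ^ (i + 1 + 1)⌋).toNat % p = (⌊Int.fract ((p:ℝ) * u) * (p:ℝ) ^ (i + 1)⌋).toNat % p
  have hA : 0 ≤ ⌊u * (p:ℝ) ^ (i + 1 + 1)⌋ := Int.floor_nonneg.mpr (by positivity)
  have hX : 0 ≤ ⌊Int.fract ((p:ℝ) * u) * (p:ℝ) ^ (i + 1)⌋ :=
    Int.floor_nonneg.mpr (mul_nonneg (Int.fract_nonneg _) (by positivity))
  have hmod : ⌊Int.fract ((p:ℝ) * u) * (p:ℝ) ^ (i + 1)⌋ % (p : ℤ)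
      = ⌊u * (p:ℝ) ^ (i + 1 + 1)⌋ % (p : ℤ) := by
    rw [hfl]
    have hre : ⌊u * (p:ℝ) ^ (i + 1 + 1)⌋ - ⌊(p:ℝ) * u⌋ * (p : ℤ) ^ (i + 1)
        = ⌊u * (p:ℝ) ^ (i + 1 + 1)⌋ + (p : ℤ) * (-(⌊(p:ℝ) * u⌋ * (p : ℤ) ^ i)) := by
      rw [pow_succ]; ring
    rw [hre, Int.add_mul_emod_self_left]
  refine Nat.cast_injective (R := ℤ) ?_
  push_cast [Int.toNat_of_nonneg hX, Int.toNat_of_nonneg hA]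
  exact hmod.symm


/-! Measurability -/

lemma firstNot_eq_iff (p : ℕ) (x : ℕ → ℕ) (n : ℕ) :
    firstNot p x = n ↔
      (x n ≠ p - 1 ∧ ∀ m < n, x m = p - 1) ∨ (n = 0 ∧ ∀ i, x i = p - 1) := by
  constructor
  · intro h
    by_cases hS : ∃ i, x i ≠ p - 1
    · left
      have hmem : x (firstNot p x) ≠ p - 1 := Nat.sInf_mem hS
      rw [h] at hmem
      refine ⟨hmem, fun m hm => ?_⟩
      by_contra hc
      have hle : firstNot p x ≤ m := Nat.sInf_le hc
      omega
    · push_neg at hS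
      refine Or.inr ⟨?_, hS⟩
      rw [← h, firstNot, show {i | x i ≠ p - 1} = ∅ from by ext i; simp [hS i]]
      exact Nat.sInf_empty
  · rintro (⟨h1, h2⟩ | ⟨rfl, h⟩)
    · refine le_antisymm (Nat.sInf_le h1) ?_
      have hmem : x (firstNot p x) ≠ p - 1 :=
        Nat.sInf_mem (show ∃ i, x i ≠ p - 1 from ⟨n, h1⟩)
      by_contra hlt
      push_neg at hlt
      exact hmem (h2 _ hlt)
    · rw [firstNot, show {i | x i ≠ p - 1} = ∅ from by ext i; simp [h i]]
      exact Nat.sInf_empty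

lemma measurableSet_coord (i : ℕ) (s : Set ℕ) : MeasurableSet {x : ℕ → ℕ | x i ∈ s} :=
  measurable_pi_apply i (MeasurableSet.of_discrete)

lemma measurableSet_firstNot (p n : ℕ) : MeasurableSet {x : ℕ → ℕ | firstNot p x = n} := by
  have hset : {x : ℕ → ℕ | firstNot p x = n} =
      ({x : ℕ → ℕ | x n ≠ p - 1} ∩ ⋂ m, {x : ℕ → ℕ | m < n → x m = p - 1}) ∪
      ({x : ℕ → ℕ | n = 0} ∩ ⋂ i, {x : ℕ → ℕ | x i = p - 1}) := by
    ext x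
    simp only [Set.mem_setOf_eq, Set.mem_union, Set.mem_inter_iff, Set.mem_iInter,
      firstNot_eq_iff]
  rw [hset]
  refine MeasurableSet.union
    (MeasurableSet.inter ?_ (MeasurableSet.iInter fun m => ?_))
    (MeasurableSet.inter ?_ (MeasurableSet.iInter fun i => ?_))
  · exact measurableSet_coord n {a : ℕ | a ≠ p - 1}
  · by_cases hm : m < n
    · simp only [hm, true_implies]
      exact measurableSet_coord m {a : ℕ | a = p - 1}
    · simp only [hm, false_implies, Set.setOf_true]
      exact MeasurableSet.univ
  · by_cases hn : n = 0
    · simp only [hn, Set.setOf_true]; exact MeasurableSet.univ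
    · simp only [hn, Set.setOf_false]; exact MeasurableSet.empty
  · exact measurableSet_coord i {a : ℕ | a = p - 1}

lemma measurable_firstNot (p : ℕ) : Measurable (firstNot p) :=
  measurable_to_countable' fun n => measurableSet_firstNot p n

lemma measurable_odo (p : ℕ) : Measurable (odo p) := by
  apply measurable_pi_lambda
  intro i
  simp only [odo]
  refine Measurable.ite ?_ measurable_const (Measurable.ite ?_ ?_ (measurable_pi_apply i))
  · exact (measurable_firstNot p) (MeasurableSet.of_discrete (s := {a : ℕ | i < a}))
  · exact (measurable_firstNot p) (MeasurableSet.of_discrete (s := {a : ℕ | i = a}))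
  · exact (Measurable.of_discrete (f := fun a : ℕ => a + 1)).comp (measurable_pi_apply i)

lemma measurable_phi (p : ℕ) : Measurable (phi p) := by
  apply measurable_to_countable'
  intro v
  have hset : (phi p) ⁻¹' {v} = ⋃ n, ({x : ℕ → ℕ | firstNot p x = n} ∩ {x : ℕ → ℕ | x n = v}) := by
    ext x
    simp only [Set.mem_preimage, Set.mem_singleton_iff, Set.mem_iUnion, Set.mem_inter_iff,
      Set.mem_setOf_eq, phi]
    constructor
    · intro h; exact ⟨firstNot p x, rfl, h⟩
    · rintro ⟨n, hn, hv⟩; rw [hn]; exact hv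
  rw [hset]
  exact MeasurableSet.iUnion fun n => (measurableSet_firstNot p n).inter
    (measurableSet_coord n {a : ℕ | a = v})

lemma measurable_phiSum (p m : ℕ) : Measurable (phiSum p m) := by
  show Measurable fun x => ∑ j ∈ Finset.range m, phi p ((odo p)^[j] x)
  exact Finset.measurable_sum _ fun j _ => (measurable_phi p).comp ((measurable_odo p).iterate j)

lemma measurable_digitsOf (p : ℕ) : Measurable (digitsOf p) := by
  apply measurable_pi_lambda
  intro i
  exact (Measurable.of_discrete (f := fun z : ℤ => z.toNat % p)).comp
    (Int.measurable_floor.comp (measurable_id.mul_const ((p:ℝ) ^ (i + 1))))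

lemma measurable_T (p : ℕ) : Measurable (fun u : ℝ => Int.fract ((p : ℝ) * u)) :=
  measurable_fract.comp (measurable_const_mul _)

/-! Measure preservation of `u ↦ fract (p u)` on `[0,1)` -/

lemma Ico_eq_biUnion (hp : 3 ≤ p) :
    Set.Ico (0:ℝ) 1 = ⋃ k ∈ Finset.range p, Set.Ico ((k:ℝ)/p) (((k:ℝ)+1)/p) := by
  have hp0 : (0:ℝ) < p := by exact_mod_cast (by omega : 0 < p)
  ext u
  simp only [Set.mem_Ico, Finset.mem_range, Set.mem_iUnion, exists_prop]
  constructor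
  · rintro ⟨h0, h1⟩
    have hup : 0 ≤ u * p := by positivity
    refine ⟨⌊u * (p:ℝ)⌋₊, ?_, ?_, ?_⟩
    · rw [Nat.floor_lt hup]
      nlinarith
    · rw [div_le_iff₀ hp0]
      exact Nat.floor_le hup
    · rw [lt_div_iff₀ hp0]
      exact Nat.lt_floor_add_one _
  · rintro ⟨k, hk, h0, h1⟩
    have hk1 : (k:ℝ) + 1 ≤ p := by exact_mod_cast (by omega : k + 1 ≤ p)
    refine ⟨le_trans (by positivity) h0, lt_of_lt_of_le h1 ?_⟩
    rw [div_le_one hp0]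
    exact hk1

lemma restrict_sum_pieces (hp : 3 ≤ p) :
    volume.restrict (Set.Ico (0:ℝ) 1)
      = ∑ k ∈ Finset.range p, volume.restrict (Set.Ico ((k:ℝ)/p) (((k:ℝ)+1)/p)) := by
  have hp0 : (0:ℝ) < p := by exact_mod_cast (by omega : 0 < p)
  ext s hs
  rw [Measure.finset_sum_apply]
  simp only [Measure.restrict_apply hs]
  rw [show s ∩ Set.Ico (0:ℝ) 1
      = ⋃ k ∈ Finset.range p, (s ∩ Set.Ico ((k:ℝ)/p) (((k:ℝ)+1)/p)) from by
    rw [Ico_eq_biUnion hp, Set.inter_iUnion₂]]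
  refine measure_biUnion_finset ?_ fun k _ => hs.inter measurableSet_Ico
  intro a _ b _ hab
  have hdisj : ∀ a b : ℕ, a < b →
      Disjoint (Set.Ico ((a:ℝ)/p) (((a:ℝ)+1)/p)) (Set.Ico ((b:ℝ)/p) (((b:ℝ)+1)/p)) := by
    intro a b h
    rw [Set.Ico_disjoint_Ico]
    have hab1 : (a:ℝ) + 1 ≤ b := by exact_mod_cast (by omega : a + 1 ≤ b)
    calc min (((a:ℝ)+1)/p) (((b:ℝ)+1)/p) ≤ ((a:ℝ)+1)/p := min_le_left _ _
      _ ≤ (b:ℝ)/p := by rw [div_le_div_iff_of_pos_right hp0]; exact hab1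
      _ ≤ max ((a:ℝ)/p) ((b:ℝ)/p) := le_max_right _ _
  rcases lt_or_gt_of_ne hab with h | h
  · exact ((hdisj a b h).mono Set.inter_subset_right Set.inter_subset_right)
  · exact ((hdisj b a h).symm.mono Set.inter_subset_right Set.inter_subset_right)

lemma map_fract_restrict (hp : 3 ≤ p) :
    Measure.map (fun u : ℝ => Int.fract ((p:ℝ) * u)) (volume.restrict (Set.Ico (0:ℝ) 1))
      = volume.restrict (Set.Ico (0:ℝ) 1) := by
  have hp0 : (0:ℝ) < p := by exact_mod_cast (by omega : 0 < p)
  have piece : ∀ k : ℕ,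
      Measure.map (fun u : ℝ => Int.fract ((p:ℝ) * u))
        (volume.restrict (Set.Ico ((k:ℝ)/p) (((k:ℝ)+1)/p)))
      = ENNReal.ofReal (p:ℝ)⁻¹ • volume.restrict (Set.Ico (0:ℝ) 1) := by
    intro k
    have hfk_meas : Measurable (fun u : ℝ => (p:ℝ) * u - k) :=
      (measurable_const_mul _).sub_const _
    have hae : (fun u : ℝ => Int.fract ((p:ℝ) * u))
        =ᵐ[volume.restrict (Set.Ico ((k:ℝ)/p) (((k:ℝ)+1)/p))] (fun u => (p:ℝ) * u - k) := by
      refine Filter.eventuallyEq_of_mem (self_mem_ae_restrict measurableSet_Ico) ?_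
      intro u hu
      simp only [Set.mem_Ico] at hu
      have hfloor : ⌊(p:ℝ) * u⌋ = (k : ℤ) := by
        rw [Int.floor_eq_iff]
        constructor
        · push_cast
          have := (div_le_iff₀ hp0).mp hu.1
          linarith
        · push_cast
          have := (lt_div_iff₀ hp0).mp hu.2
          linarith
      show Int.fract ((p:ℝ) * u) = (p:ℝ) * u - k
      rw [Int.fract, hfloor, Int.cast_natCast]
    rw [Measure.map_congr hae]
    have hpre : Set.Ico ((k:ℝ)/p) (((k:ℝ)+1)/p)
        = (fun u : ℝ => (p:ℝ) * u - k) ⁻¹' (Set.Ico 0 1) := by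
      ext u
      simp only [Set.mem_Ico, Set.mem_preimage]
      constructor
      · rintro ⟨h1, h2⟩
        have ha := (div_le_iff₀ hp0).mp h1
        have hb := (lt_div_iff₀ hp0).mp h2
        constructor <;> linarith
      · rintro ⟨h1, h2⟩
        constructor
        · rw [div_le_iff₀ hp0]; linarith
        · rw [lt_div_iff₀ hp0]; linarith
    rw [hpre, ← Measure.restrict_map hfk_meas measurableSet_Ico]
    congr 1
    have h1 : (fun u : ℝ => (p:ℝ) * u - k)
        = (fun y : ℝ => y + (-(k:ℝ))) ∘ (fun u : ℝ => (p:ℝ) * u) := by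
      funext u; simp [sub_eq_add_neg]
    rw [h1, ← Measure.map_map (measurable_add_const _) (measurable_const_mul _),
        Real.map_volume_mul_left (show (p:ℝ) ≠ 0 from hp0.ne'),
        Measure.map_smul, map_add_right_eq_self volume (-(k:ℝ)), Measure.restrict_smul]
    congr 1
    rw [abs_of_nonneg (by positivity)]
  have hmapsum : Measure.map (fun u : ℝ => Int.fract ((p:ℝ) * u))
        (volume.restrict (Set.Ico (0:ℝ) 1))
      = ∑ k ∈ Finset.range p, Measure.map (fun u : ℝ => Int.fract ((p:ℝ) * u))
          (volume.restrict (Set.Ico ((k:ℝ)/p) (((k:ℝ)+1)/p))) := by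
    rw [restrict_sum_pieces hp]
    ext s hs
    rw [Measure.map_apply (measurable_T p) hs, Measure.finset_sum_apply,
        Measure.finset_sum_apply]
    exact Finset.sum_congr rfl fun k _ => (Measure.map_apply (measurable_T p) hs).symm
  rw [hmapsum, Finset.sum_congr rfl fun k _ => piece k, Finset.sum_const, Finset.card_range,
      ← Nat.cast_smul_eq_nsmul ℝ≥0∞ p _, smul_smul]
  have hcoef : (p : ℝ≥0∞) * ENNReal.ofReal (p:ℝ)⁻¹ = 1 := by
    rw [← ENNReal.ofReal_natCast, ← ENNReal.ofReal_mul (by positivity),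
        mul_inv_cancel₀ hp0.ne', ENNReal.ofReal_one]
  rw [hcoef, one_smul]

/-! pim lemmas -/

lemma measurableSet_phiSum_eq (p m j : ℕ) :
    MeasurableSet {x : ℕ → ℕ | phiSum p m x = j} :=
  measurable_phiSum p m (MeasurableSet.of_discrete (s := {a : ℕ | a = j}))

lemma pim_eq (p m j : ℕ) :
    pim p m j = volume.restrict (Set.Ico (0:ℝ) 1) {u | phiSum p m (digitsOf p u) = j} := by
  rw [pim, lam, Measure.map_apply (measurable_digitsOf p) (measurableSet_phiSum_eq p m j)]
  rfl

lemma phiSum_le (hp : 3 ≤ p) (hx : Good p x) (m : ℕ) : phiSum p m x ≤ m * (p - 2) := by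
  rw [phiSum]
  calc ∑ j ∈ Finset.range m, phi p ((odo p)^[j] x)
      ≤ ∑ _j ∈ Finset.range m, (p - 2) :=
        Finset.sum_le_sum fun j _ => phi_le hp (good_iter hp hx j)
    _ = m * (p - 2) := by rw [Finset.sum_const, Finset.card_range, smul_eq_mul]

lemma measurableSet_digits_phiSum (p m j : ℕ) :
    MeasurableSet {u : ℝ | phiSum p m (digitsOf p u) = j} :=
  ((measurable_phiSum p m).comp (measurable_digitsOf p))
    (MeasurableSet.of_discrete (s := {a : ℕ | a = j}))

lemma pim_eq_zero (hp : 3 ≤ p) {m j : ℕ} (h : m * (p - 2) < j) : pim p m j = 0 := by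
  rw [pim_eq, Measure.restrict_apply (measurableSet_digits_phiSum p m j)]
  rw [show {u : ℝ | phiSum p m (digitsOf p u) = j} ∩ Set.Ico (0:ℝ) 1 = (∅ : Set ℝ) from ?_,
      measure_empty]
  ext u
  simp only [Set.mem_inter_iff, Set.mem_setOf_eq, Set.mem_Ico, Set.mem_empty_iff_false,
    iff_false]
  rintro ⟨h1, h2, -⟩
  have := phiSum_le hp (good_digitsOf hp h2) m
  omega

lemma pim_shift (hp : 3 ≤ p) (m j : ℕ) :
    pim p (p * m) j
      = if m * tri (p - 2) ≤ j then pim p m (j - m * tri (p - 2)) else 0 := by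
  have hmeas2 : MeasurableSet
      {u : ℝ | m * tri (p - 2) + phiSum p m (digitsOf p (Int.fract ((p:ℝ) * u))) = j} := by
    have : Measurable fun u : ℝ =>
        m * tri (p - 2) + phiSum p m (digitsOf p (Int.fract ((p:ℝ) * u))) :=
      Measurable.of_discrete.comp
        (((measurable_phiSum p m).comp (measurable_digitsOf p)).comp (measurable_T p))
    exact this (MeasurableSet.of_discrete (s := {a : ℕ | a = j}))
  rw [pim_eq, Measure.restrict_apply (measurableSet_digits_phiSum p (p*m) j)]
  have hset : {u : ℝ | phiSum p (p*m) (digitsOf p u) = j} ∩ Set.Ico (0:ℝ) 1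
      = {u : ℝ | m * tri (p - 2) + phiSum p m (digitsOf p (Int.fract ((p:ℝ) * u))) = j}
        ∩ Set.Ico (0:ℝ) 1 := by
    ext u
    simp only [Set.mem_inter_iff, Set.mem_setOf_eq, Set.mem_Ico]
    have hiff : ∀ hu : 0 ≤ u,
        (phiSum p (p*m) (digitsOf p u) = j ↔
          m * tri (p - 2) + phiSum p m (digitsOf p (Int.fract ((p:ℝ) * u))) = j) := by
      intro hu
      rw [← sh_digitsOf hp hu, ← main_identity hp (good_digitsOf hp hu) m]
    constructor
    · rintro ⟨h1, hu⟩; exact ⟨(hiff hu.1).mp h1, hu⟩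
    · rintro ⟨h1, hu⟩; exact ⟨(hiff hu.1).mpr h1, hu⟩
  rw [hset, ← Measure.restrict_apply hmeas2]
  by_cases hle : m * tri (p - 2) ≤ j
  · rw [if_pos hle]
    have hset2 : {u : ℝ | m * tri (p - 2) + phiSum p m (digitsOf p (Int.fract ((p:ℝ) * u))) = j}
        = (fun u : ℝ => Int.fract ((p:ℝ) * u)) ⁻¹'
            {u : ℝ | phiSum p m (digitsOf p u) = j - m * tri (p - 2)} := by
      ext u
      simp only [Set.mem_setOf_eq, Set.mem_preimage]
      omega
    rw [hset2, ← Measure.map_apply (measurable_T p)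
        (measurableSet_digits_phiSum p m (j - m * tri (p - 2))),
        map_fract_restrict hp, ← pim_eq]
  · rw [if_neg hle]
    have hempty : {u : ℝ | m * tri (p - 2) + phiSum p m (digitsOf p (Int.fract ((p:ℝ) * u))) = j}
        = (∅ : Set ℝ) := by
      ext u
      simp only [Set.mem_setOf_eq, Set.mem_empty_iff_false, iff_false]
      omega
    rw [hempty]
    simp

/-- `P_{pm}^p(t) = t^{m Δ_{p-2}} P_m^p(t)` for every `m ≥ 0`. -/
theorem statement_6 (p : ℕ) (hp : 3 ≤ p) (m : ℕ) (t : ℝ) :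
    P p (p * m) t = t ^ (m * tri (p - 2)) * P p m t := by
  have key := pim_shift hp m
  have hΔ : tri (p - 2) ≤ (p - 2) * (p - 1) := by
    rw [tri]
    calc (p - 2) * (p - 2 + 1) / 2 ≤ (p - 2) * (p - 2 + 1) := Nat.div_le_self _ _
      _ = (p - 2) * (p - 1) := by congr 1; omega
  have h1 : m * tri (p - 2) + (m * (p - 2) + 1) ≤ p * m * (p - 2) + 1 := by
    have h2 : m * tri (p - 2) + m * (p - 2) ≤ p * m * (p - 2) := by
      calc m * tri (p - 2) + m * (p - 2)
          ≤ m * ((p - 2) * (p - 1)) + m * (p - 2) :=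
            Nat.add_le_add_right (Nat.mul_le_mul_left m hΔ) _
        _ = m * ((p - 2) * (p - 1) + (p - 2)) := by ring
        _ = m * ((p - 2) * ((p - 1) + 1)) := by ring
        _ = m * ((p - 2) * p) := by rw [show p - 1 + 1 = p by omega]
        _ = p * m * (p - 2) := by ring
    omega
  set c := m * tri (p - 2) with hc
  set K := m * (p - 2) with hK
  set N := p * m * (p - 2) with hN
  rw [P, P, Finset.mul_sum]
  rw [show Finset.range (N + 1) = Finset.range (c + (N + 1 - c)) from by congr 1; omega,
      Finset.sum_range_add]
  have hzero1 : ∑ j ∈ Finset.range c, (pim p (p * m) j).toReal * t ^ j = 0 := by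
    refine Finset.sum_eq_zero fun j hj => ?_
    simp only [Finset.mem_range] at hj
    rw [key j, if_neg (by omega)]
    simp
  rw [hzero1, zero_add]
  rw [show Finset.range (N + 1 - c) = Finset.range ((K + 1) + (N - c - K)) from by
    congr 1; omega, Finset.sum_range_add]
  have hzero2 : ∑ i ∈ Finset.range (N - c - K),
      (pim p (p * m) (c + (K + 1 + i))).toReal * t ^ (c + (K + 1 + i)) = 0 := by
    refine Finset.sum_eq_zero fun i _ => ?_
    rw [key _, if_pos (by omega), show c + (K + 1 + i) - c = K + 1 + i by omega,
        pim_eq_zero hp (show K < K + 1 + i by omega)]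
    simp
  rw [show (∑ i ∈ Finset.range (N - c - K),
        (pim p (p * m) (c + (K + 1 + i))).toReal * t ^ (c + (K + 1 + i))) = 0 from hzero2,
      add_zero]
  refine Finset.sum_congr rfl fun j hj => ?_
  simp only [Finset.mem_range] at hj
  show (pim p (p * m) (c + j)).toReal * t ^ (c + j) = t ^ c * ((pim p m j).toReal * t ^ j)
  rw [key (c + j), if_pos (by omega), show c + j - c = j by omega, pow_add]
  ring

end Chacon
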